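/- arXiv:2408.09590 — 8 statements merged into one kernel-verified Lean document; each statement's English description precedes it below -/
import Mathlib

section
/- In the Kraus–Lehmann logic, ⊢ B(Bφ → φ) for every formula φ. -/
/-- Formulas of the bimodal language: propositional letters, ⊥, →, and
the operators K (knowledge) and B (belief). -/
inductive Formula : Type
  | atom : Nat → Formula
  | falsum : Formula
  | imp : Formula → Formula → Formula
  | kbox : Formula → Formula
  | bbox : Formula → Formula

namespace Formula

/-- ¬φ := φ → ⊥ -/
def neg (φ : Formula) : Formula := imp φ falsum
/-- φ ∧ ψ := ¬(φ → ¬ψ) -/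
def conj (φ ψ : Formula) : Formula := neg (imp φ (neg ψ))
/-- φ ∨ ψ := ¬φ → ψ -/
def disj (φ ψ : Formula) : Formula := imp (neg φ) ψ
/-- φ ↔ ψ := (φ → ψ) ∧ (ψ → φ) -/
def biimp (φ ψ : Formula) : Formula := conj (imp φ ψ) (imp ψ φ)
/-- ◇_K φ := ¬K¬φ -/
def diaK (φ : Formula) : Formula := neg (kbox (neg φ))
/-- ◇_B φ := ¬B¬φ -/
def diaB (φ : Formula) : Formula := neg (bbox (neg φ))

/-- φ is a propositional tautology: it is true under every assignment of
truth values to formulas that respects → and ⊥ (so atoms and modalized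
formulas are treated as opaque propositional units). -/
def Taut (φ : Formula) : Prop :=
  ∀ v : Formula → Prop,
    (∀ ψ χ, v (imp ψ χ) ↔ (v ψ → v χ)) → ¬ v falsum → v φ

end Formula

open Formula

/-- Derivability in the Kraus–Lehmann logic of knowledge and belief. -/
inductive KL : Formula → Prop
  | taut {φ} : Taut φ → KL φ
  | distK (φ ψ) : KL (imp (kbox (imp φ ψ)) (imp (kbox φ) (kbox ψ)))
  | truth (φ) : KL (imp (kbox φ) φ)
  | negIntro (φ) : KL (imp (neg (kbox φ)) (kbox (neg (kbox φ))))
  | distB (φ ψ) : KL (imp (bbox (imp φ ψ)) (imp (bbox φ) (bbox ψ)))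
  | consB (φ) : KL (imp (bbox φ) (neg (bbox (neg φ))))
  | keb (φ) : KL (imp (kbox φ) (bbox φ))
  | cb (φ) : KL (imp (bbox φ) (kbox (bbox φ)))
  | mp {φ ψ} : KL (imp φ ψ) → KL φ → KL ψ
  | necK {φ} : KL φ → KL (kbox φ)

/-- Necessitation for B, derived from necK and keb. -/
lemma KL.necB {φ : Formula} (h : KL φ) : KL (bbox φ) :=
  KL.mp (KL.keb φ) (KL.necK h)

/-- Monotonicity of B. -/
lemma KL.monoB {a b : Formula} (h : KL (imp a b)) :
    KL (imp (bbox a) (bbox b)) :=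
  KL.mp (KL.distB a b) (KL.necB h)

/-- Transitivity of implication. -/
lemma KL.trans {a b c : Formula} (h1 : KL (imp a b)) (h2 : KL (imp b c)) :
    KL (imp a c) := by
  refine KL.mp (KL.mp (KL.taut ?_) h1) h2
  intro v hv hf
  simp only [hv]
  tauto

/-- Derived negative introspection for belief: ¬Bφ → B¬Bφ. -/
lemma KL.negIntroB (φ : Formula) :
    KL (imp (neg (bbox φ)) (bbox (neg (bbox φ)))) := by
  have s1 : KL (imp (neg (bbox φ)) (neg (kbox (bbox φ)))) := by
    refine KL.mp (KL.taut ?_) (KL.truth (bbox φ))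
    intro v hv hf; simp only [neg, hv]; tauto
  have s2 := KL.negIntro (bbox φ)
  have s3 := KL.keb (neg (kbox (bbox φ)))
  have s4 : KL (imp (bbox (neg (kbox (bbox φ)))) (bbox (neg (bbox φ)))) := by
    refine KL.monoB (KL.mp (KL.taut ?_) (KL.cb φ))
    intro v hv hf; simp only [neg, hv]; tauto
  exact KL.trans (KL.trans (KL.trans s1 s2) s3) s4

/-- in the Kraus–Lehmann logic, ⊢ B(Bφ → φ) for every φ. -/
theorem KL_belief_in_belief_truth (φ : Formula) :
    KL (bbox (imp (bbox φ) φ)) := by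
  set ψ := imp (bbox φ) φ with hψ
  have h1 : KL (imp (bbox φ) (bbox ψ)) := by
    refine KL.monoB (KL.taut ?_)
    intro v hv hf; simp only [hψ, hv]; tauto
  have h2 : KL (imp (neg (bbox φ)) (bbox ψ)) := by
    refine KL.trans (KL.negIntroB φ) (KL.monoB (KL.taut ?_))
    intro v hv hf; simp only [hψ, neg, hv]; tauto
  refine KL.mp (KL.mp (KL.taut ?_) h1) h2
  intro v hv hf; simp only [neg, hv]; tauto
end

section
/- Every theorem of the logic LSED^R is valid on every Kripke frame (W, R_k, R_b) satisfying: R_k is reflexive, R_b is serial, R_b ⊆ R_k, and for every world x there exists a world z with R_b(x,z) such that every z' with R_k(z,z') satisfies R_b(x,z'). -/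
open Formula

/-- Kripke satisfaction for the bimodal language on a model
(W, R_k, R_b, V). -/
def Sat {W : Type} (Rk Rb : W → W → Prop) (V : Nat → W → Prop) :
    Formula → W → Prop
  | Formula.atom n, w => V n w
  | Formula.falsum, _ => False
  | Formula.imp φ ψ, w => Sat Rk Rb V φ w → Sat Rk Rb V ψ w
  | Formula.kbox φ, w => ∀ v, Rk w v → Sat Rk Rb V φ v
  | Formula.bbox φ, w => ∀ v, Rb w v → Sat Rk Rb V φ v

/-- Derivability in LSED^R (Reasonable Löb-Safe Epistemic Doxastic logic). -/
inductive LSEDR : Formula → Prop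
  | taut {φ} : Taut φ → LSEDR φ
  | distK (φ ψ) : LSEDR (imp (kbox (imp φ ψ)) (imp (kbox φ) (kbox ψ)))
  | truth (φ) : LSEDR (imp (kbox φ) φ)
  | distB (φ ψ) : LSEDR (imp (bbox (imp φ ψ)) (imp (bbox φ) (bbox ψ)))
  | consB (φ) : LSEDR (imp (bbox φ) (neg (bbox (neg φ))))
  | keb (φ) : LSEDR (imp (kbox φ) (bbox φ))
  | rb (φ) : LSEDR (imp (bbox φ) (diaB (kbox φ)))
  | mp {φ ψ} : LSEDR (imp φ ψ) → LSEDR φ → LSEDR ψ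
  | necK {φ} : LSEDR φ → LSEDR (kbox φ)

/-- every theorem of LSED^R is valid on every frame
(W, R_k, R_b) with R_k reflexive, R_b serial, R_b ⊆ R_k, and the
Reasonable Belief frame condition. -/
theorem LSEDR_sound (φ : Formula) (h : LSEDR φ)
    (W : Type) (Rk Rb : W → W → Prop)
    (hrefl : ∀ w, Rk w w)
    (hser : ∀ w, ∃ v, Rb w v)
    (hsub : ∀ w v, Rb w v → Rk w v)
    (hRB : ∀ x, ∃ z, Rb x z ∧ ∀ z', Rk z z' → Rb x z')
    (V : Nat → W → Prop) (w : W) :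
    Sat Rk Rb V φ w := by
  induction h generalizing w with
  | @taut φ ht =>
      exact ht (fun ψ => Sat Rk Rb V ψ w) (fun _ _ => Iff.rfl) (fun h => h)
  | distK φ ψ =>
      intro h1 h2 v hv; exact h1 v hv (h2 v hv)
  | truth φ => intro h1; exact h1 w (hrefl w)
  | distB φ ψ => intro h1 h2 v hv; exact h1 v hv (h2 v hv)
  | consB φ =>
      intro h1 h2
      obtain ⟨v, hv⟩ := hser w
      exact h2 v hv (h1 v hv)
  | keb φ => intro h1 v hv; exact h1 v (hsub w v hv)
  | rb φ =>
      intro h1 h2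
      obtain ⟨z, hz, hz'⟩ := hRB w
      exact h2 z hz (fun z' hzz' => h1 z' (hz' z' hzz'))
  | mp _ _ ih1 ih2 => exact ih1 w (ih2 w)
  | necK _ ih => intro v _; exact ih v
end

section
/- Positive Belief Introspection fails on the class of LSED^R frames: there exist a Kripke frame (W, R_k, R_b) satisfying R_k reflexive, R_b serial, R_b ⊆ R_k, and the Reasonable Belief condition (for every world x there exists z with R_b(x,z) such that every z' with R_k(z,z') satisfies R_b(x,z')), a valuation, a propositional letter p, and a world w at which B p is true but B B p is false. -/
open Formula

/-- Positive Belief Introspection fails on the class of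
LSED^R frames: there is a frame satisfying the LSED^R frame conditions,
a valuation, a letter p, and a world where B p holds but B B p fails. -/
theorem positive_belief_introspection_fails :
    ∃ (W : Type) (Rk Rb : W → W → Prop) (V : Nat → W → Prop)
      (p : Nat) (w : W),
      (∀ x, Rk x x) ∧
      (∀ x, ∃ y, Rb x y) ∧
      (∀ x y, Rb x y → Rk x y) ∧
      (∀ x, ∃ z, Rb x z ∧ ∀ z', Rk z z' → Rb x z') ∧
      Sat Rk Rb V (bbox (atom p)) w ∧
      ¬ Sat Rk Rb V (bbox (bbox (atom p))) w := by
  refine ⟨Fin 4,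
    (fun x y => x = y ∨ (x.val, y.val) ∈ [(0,1),(0,2),(1,3),(2,2),(3,3)]),
    (fun x y => (x.val, y.val) ∈ [(0,1),(0,2),(1,3),(2,2),(3,3)]),
    (fun _ w => w.val = 1 ∨ w.val = 2), 0, 0, ?_, ?_, ?_, ?_, ?_, ?_⟩
  · decide
  · decide
  · decide
  · decide
  · show ∀ v : Fin 4, _ → (v.val = 1 ∨ v.val = 2)
    decide
  · intro h
    have h2 : Sat _ _ _ (atom 0) (3 : Fin 4) := h 1 (by decide) 3 (by decide)
    simp [Sat] at h2
end

section
/- Löb's scheme for belief fails on the class of LSED^R frames: there exist a Kripke frame (W, R_k, R_b) satisfying R_k reflexive, R_b serial, R_b ⊆ R_k, and the Reasonable Belief condition (for every world x there exists z with R_b(x,z) such that every z' with R_k(z,z') satisfies R_b(x,z')), a valuation, a propositional letter p, and a world w at which B(B p → p) is true but B p is false. -/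
open Formula

/-- Löb's scheme for belief fails on the class of LSED^R
frames: there is a frame satisfying the LSED^R frame conditions, a
valuation, a letter p, and a world where B(B p → p) holds but B p fails. -/
theorem lob_scheme_fails :
    ∃ (W : Type) (Rk Rb : W → W → Prop) (V : Nat → W → Prop)
      (p : Nat) (w : W),
      (∀ x, Rk x x) ∧
      (∀ x, ∃ y, Rb x y) ∧
      (∀ x y, Rb x y → Rk x y) ∧
      (∀ x, ∃ z, Rb x z ∧ ∀ z', Rk z z' → Rb x z') ∧
      Sat Rk Rb V (bbox (imp (bbox (atom p)) (atom p))) w ∧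
      ¬ Sat Rk Rb V (bbox (atom p)) w := by
  refine ⟨Bool, fun x y => x = y ∨ y = true, fun _ y => y = true,
    fun _ w => w = false, 0, false, ?_, ?_, ?_, ?_, ?_, ?_⟩
  · intro x; left; rfl
  · intro x; exact ⟨true, rfl⟩
  · intro x y h; right; exact h
  · intro x
    refine ⟨true, rfl, ?_⟩
    rintro z' (rfl | rfl) <;> rfl
  · intro v hv
    subst hv
    simp only [Sat]
    intro hB
    have := hB true rfl
    simp [Sat] at this
  · intro h
    have := h true rfl
    simp [Sat] at this
end

section
/- Sahlqvist correspondence for Reasonable Belief: a Kripke frame (W, R_k, R_b) validates the scheme B p → ◇_B K p (i.e., B p → ¬B¬K p is true at every world under every valuation, for a propositional letter p) if and only if for every world x there exists a world z with R_b(x,z) such that every z' with R_k(z,z') satisfies R_b(x,z'). -/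
open Formula

/-- Sahlqvist correspondence for Reasonable Belief: a frame
validates B p → ◇_B K p iff for every world x there is z with R_b(x,z)
such that every z' with R_k(z,z') satisfies R_b(x,z'). -/
theorem reasonable_belief_correspondence
    (W : Type) (Rk Rb : W → W → Prop) :
    (∀ (p : Nat) (V : Nat → W → Prop) (w : W),
        Sat Rk Rb V (imp (bbox (atom p)) (diaB (kbox (atom p)))) w) ↔
    (∀ x, ∃ z, Rb x z ∧ ∀ z', Rk z z' → Rb x z') := by
  constructor
  · intro h x
    have hx := h 0 (fun _ w => Rb x w) x
    simp only [Sat, diaB, neg] at hx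
    by_contra hc
    push_neg at hc
    exact hx (fun v hv => hv) (fun z hz hall => (hc z hz).elim (fun z' ⟨h1,h2⟩ => h2 (hall z' h1)))
  · intro h p V w
    intro hb hdia
    obtain ⟨z, hz, hall⟩ := h w
    exact hdia z hz (fun z' hz' => hb z' (hall z' hz'))
end

section
/- Sahlqvist correspondence for Supported Belief: a Kripke frame (W, R_k, R_b) validates the scheme B p → ◇_K K p (i.e., B p → ¬K¬K p is true at every world under every valuation, for a propositional letter p) if and only if for every world x there exists a world z with R_k(x,z) such that every z' with R_k(z,z') satisfies R_b(x,z'). -/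
open Formula

/-- Sahlqvist correspondence for Supported Belief: a frame
validates B p → ◇_K K p iff for every world x there is z with R_k(x,z)
such that every z' with R_k(z,z') satisfies R_b(x,z'). -/
theorem supported_belief_correspondence
    (W : Type) (Rk Rb : W → W → Prop) :
    (∀ (p : Nat) (V : Nat → W → Prop) (w : W),
        Sat Rk Rb V (imp (bbox (atom p)) (diaK (kbox (atom p)))) w) ↔
    (∀ x, ∃ z, Rk x z ∧ ∀ z', Rk z z' → Rb x z') := by
  constructor
  · intro h x
    have hx := h 0 (fun _ w => Rb x w) x
    simp only [Sat, diaK, neg] at hx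
    have h2 := hx (fun v hv => hv)
    by_contra hc
    push_neg at hc
    exact h2 (fun z hz hall => by
      obtain ⟨z', hz', hnb⟩ := hc z hz
      exact hnb (hall z' hz'))
  · intro h p V w hB
    simp only [Sat, diaK, neg] at *
    intro hK
    obtain ⟨z, hxz, hall⟩ := h w
    exact hK z hxz (fun z' hz' => hB z' (hall z' hz'))
end

section
/- Every theorem of LSED^S is a theorem of LSED^R: if ⊢_{LSED^S} φ then ⊢_{LSED^R} φ. -/
open Formula

/-- Derivability in LSED^S (Supported Löb-Safe Epistemic Doxastic logic). -/
inductive LSEDS : Formula → Prop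
  | taut {φ} : Taut φ → LSEDS φ
  | distK (φ ψ) : LSEDS (imp (kbox (imp φ ψ)) (imp (kbox φ) (kbox ψ)))
  | truth (φ) : LSEDS (imp (kbox φ) φ)
  | distB (φ ψ) : LSEDS (imp (bbox (imp φ ψ)) (imp (bbox φ) (bbox ψ)))
  | consB (φ) : LSEDS (imp (bbox φ) (neg (bbox (neg φ))))
  | keb (φ) : LSEDS (imp (kbox φ) (bbox φ))
  | sb (φ) : LSEDS (imp (bbox φ) (diaK (kbox φ)))
  | mp {φ ψ} : LSEDS (imp φ ψ) → LSEDS φ → LSEDS ψ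
  | necK {φ} : LSEDS φ → LSEDS (kbox φ)

lemma taut_aux (a b c : Formula) :
    Taut (imp (imp a c) (imp (imp b (imp c falsum)) (imp b (imp a falsum)))) := by
  intro v hi hf
  simp only [hi]
  tauto

lemma LSEDR_sb (φ : Formula) : LSEDR (imp (bbox φ) (diaK (kbox φ))) := by
  have t := LSEDR.taut (taut_aux (kbox (neg (kbox φ))) (bbox φ) (bbox (neg (kbox φ))))
  exact (t.mp (LSEDR.keb (neg (kbox φ)))).mp (LSEDR.rb φ)

/-- every theorem of LSED^S is a theorem of LSED^R. -/
theorem LSEDS_subset_LSEDR (φ : Formula) (h : LSEDS φ) : LSEDR φ := by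
  induction h with
  | taut ht => exact LSEDR.taut ht
  | distK φ ψ => exact LSEDR.distK φ ψ
  | truth φ => exact LSEDR.truth φ
  | distB φ ψ => exact LSEDR.distB φ ψ
  | consB φ => exact LSEDR.consB φ
  | keb φ => exact LSEDR.keb φ
  | sb φ => exact LSEDR_sb φ
  | mp _ _ ih1 ih2 => exact ih1.mp ih2
  | necK _ ih => exact ih.necK
end

section
/- Every theorem of the logic LSED^S is valid on every Kripke frame (W, R_k, R_b) satisfying: R_k is reflexive, R_b is serial, R_b ⊆ R_k, and for every world x there exists a world z with R_k(x,z) such that every z' with R_k(z,z') satisfies R_b(x,z'). -/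
open Formula

/-- every theorem of LSED^S is valid on every frame
(W, R_k, R_b) with R_k reflexive, R_b serial, R_b ⊆ R_k, and the
Supported Belief frame condition. -/
theorem LSEDS_sound (φ : Formula) (h : LSEDS φ)
    (W : Type) (Rk Rb : W → W → Prop)
    (hrefl : ∀ w, Rk w w)
    (hser : ∀ w, ∃ v, Rb w v)
    (hsub : ∀ w v, Rb w v → Rk w v)
    (hSB : ∀ x, ∃ z, Rk x z ∧ ∀ z', Rk z z' → Rb x z')
    (V : Nat → W → Prop) (w : W) :
    Sat Rk Rb V φ w := by
  induction h generalizing w with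
  | @taut ψ ht =>
      exact ht (fun χ => Sat Rk Rb V χ w) (fun _ _ => Iff.rfl) (fun h => h)
  | distK φ ψ =>
      intro h1 h2 v hv; exact h1 v hv (h2 v hv)
  | truth φ =>
      intro h1; exact h1 w (hrefl w)
  | distB φ ψ =>
      intro h1 h2 v hv; exact h1 v hv (h2 v hv)
  | consB φ =>
      intro h1 h2
      obtain ⟨v, hv⟩ := hser w
      exact h2 v hv (h1 v hv)
  | keb φ =>
      intro h1 v hv; exact h1 v (hsub w v hv)
  | sb φ =>
      intro h1 h2
      obtain ⟨z, hxz, hz⟩ := hSB w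
      exact h2 z hxz (fun z' hzz' => h1 z' (hz z' hzz'))
  | mp h1 h2 ih1 ih2 =>
      exact ih1 w (ih2 w)
  | necK h ih =>
      intro v _; exact ih v
end
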